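/- arXiv:2303.00089 — 8 statements merged into one kernel-verified Lean document; each statement's English description precedes it below -/
import Mathlib

section
/- Let 1 < p ≤ 2, 0 < τ < 1, r > 1, and let s₀ ∈ (0,τ) satisfy ((p-1)·log((1-s₀)/(1-τ)) − log(s₀/τ)) / (2(2-p)) = log r. Then s₀ < 1 / (1 + r^(4-2p)·(1/τ − 1)). -/
open Real Set

theorem s_zero_upper_bound (p τ r s₀ : ℝ) (hp1 : 1 < p) (hp2 : p ≤ 2)
    (hτ0 : 0 < τ) (hτ1 : τ < 1) (hr : 1 < r) (hs₀ : s₀ ∈ Ioo 0 τ)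
    (heq : ((p - 1) * Real.log ((1 - s₀) / (1 - τ)) - Real.log (s₀ / τ))
        / (2 * (2 - p)) = Real.log r) :
    s₀ < 1 / (1 + r ^ (4 - 2 * p) * (1 / τ - 1)) := by
  obtain ⟨hs0, hsτ⟩ := hs₀
  have hr0 : (0:ℝ) < r := by linarith
  have hlr : 0 < Real.log r := Real.log_pos hr
  have hp2' : p < 2 := by
    rcases lt_or_eq_of_le hp2 with h | h
    · exact h
    · exfalso
      rw [h] at heq
      norm_num at heq
      linarith
  have h1τ : 0 < 1 - τ := by linarith
  have h1s : 0 < 1 - s₀ := by linarith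
  have hratio1 : 1 < (1 - s₀) / (1 - τ) := by
    rw [lt_div_iff₀ h1τ]; linarith
  have hL : 0 < Real.log ((1 - s₀) / (1 - τ)) := Real.log_pos hratio1
  have h2p : (0:ℝ) < 2 * (2 - p) := by nlinarith
  have hc : (p - 1) * Real.log ((1 - s₀) / (1 - τ)) - Real.log (s₀ / τ)
      = 2 * (2 - p) * Real.log r := by
    field_simp at heq
    rw [div_eq_iff (by linarith)] at heq
    linarith
  have hkey : 2 * (2 - p) * Real.log r
      < Real.log ((1 - s₀) / (1 - τ)) - Real.log (s₀ / τ) := by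
    nlinarith
  have hlog : Real.log ((1 - s₀) / (1 - τ)) - Real.log (s₀ / τ)
      = Real.log (((1 - s₀) / (1 - τ)) / (s₀ / τ)) :=
    (Real.log_div (by positivity) (by positivity)).symm
  have hrpow : r ^ (4 - 2 * p) = Real.exp ((2 * (2 - p)) * Real.log r) := by
    rw [Real.rpow_def_of_pos hr0]
    ring_nf
  have hexp : r ^ (4 - 2 * p) < ((1 - s₀) / (1 - τ)) / (s₀ / τ) := by
    rw [hrpow]
    have := Real.exp_lt_exp.mpr (hlog ▸ hkey)
    rwa [Real.exp_log (by positivity)] at this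
  have hden : 0 < 1 + r ^ (4 - 2 * p) * (1 / τ - 1) := by
    have : 0 < r ^ (4 - 2 * p) := Real.rpow_pos_of_pos hr0 _
    have h2 : 0 < 1 / τ - 1 := by
      have h3 : 1 < 1 / τ := by rw [lt_div_iff₀ hτ0]; linarith
      linarith
    positivity
  rw [lt_div_iff₀ hden]
  have hexp' : r ^ (4 - 2 * p) * ((1 - τ) * s₀) < (1 - s₀) * τ := by
    have h2' := (lt_div_iff₀ (by positivity : (0:ℝ) < s₀ / τ)).mp hexp
    rw [lt_div_iff₀ h1τ] at h2'
    have h3 := mul_lt_mul_of_pos_right h2' hτ0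
    field_simp at h3
    nlinarith [h3]
  have hτne : τ ≠ 0 := ne_of_gt hτ0
  have : s₀ * (1 + r ^ (4 - 2 * p) * (1 / τ - 1)) * τ < 1 * τ := by
    field_simp
    nlinarith [hexp']
  nlinarith [this]
end

section
/- Let 1 < p < 2 and let g : [1,∞) → (0,1) satisfy g'(t) = 2(2-p)(g(t)-1)g(t)/(t + (p-2)·t·g(t)). Then the function P(t) = t^(2-p) · (1 − g(t))^((1-p)/2) · √(g(t)) is constant, i.e., P'(t) = 0 for all t ≥ 1. -/
open Real Set

theorem P_is_constant (p : ℝ) (hp1 : 1 < p) (hp2 : p < 2) (g : ℝ → ℝ)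
    (hrange : ∀ t ∈ Ici (1 : ℝ), g t ∈ Ioo (0 : ℝ) 1)
    (hode : ∀ t ∈ Ici (1 : ℝ),
      HasDerivAt g (2 * (2 - p) * (g t - 1) * g t / (t + (p - 2) * t * g t)) t) :
    ∀ t ∈ Ici (1 : ℝ),
      HasDerivAt (fun t => t ^ (2 - p) * (1 - g t) ^ ((1 - p) / 2) * Real.sqrt (g t))
        0 t := by
  intro t ht
  have ht0 : (0:ℝ) < t := lt_of_lt_of_le one_pos ht
  obtain ⟨ha0, ha1⟩ := hrange t ht
  have hd := hode t ht
  set a := g t with ha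
  have h1a : (0:ℝ) < 1 - a := by linarith
  have hden : 0 < t + (p - 2) * t * a := by
    nlinarith [mul_pos ht0 h1a, mul_pos (mul_pos ht0 ha0) (sub_pos.mpr hp1)]
  have hS : 0 < Real.sqrt a := Real.sqrt_pos.mpr ha0
  have h1 : HasDerivAt (fun s : ℝ => s ^ (2 - p)) ((2 - p) * t ^ (2 - p - 1)) t :=
    Real.hasDerivAt_rpow_const (Or.inl (ne_of_gt ht0))
  have h2sub : HasDerivAt (fun s => 1 - g s)
      (-(2 * (2 - p) * (a - 1) * a / (t + (p - 2) * t * a))) t := by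
    have := (hasDerivAt_const t (1:ℝ)).sub hd; rwa [zero_sub] at this
  have h2 : HasDerivAt (fun s => (1 - g s) ^ ((1 - p) / 2))
      (-(2 * (2 - p) * (a - 1) * a / (t + (p - 2) * t * a)) * ((1 - p) / 2)
        * (1 - a) ^ ((1 - p) / 2 - 1)) t :=
    h2sub.rpow_const (Or.inl (ne_of_gt h1a))
  have h3 : HasDerivAt (fun s => Real.sqrt (g s))
      ((2 * (2 - p) * (a - 1) * a / (t + (p - 2) * t * a)) / (2 * Real.sqrt a)) t :=
    hd.sqrt (ne_of_gt ha0)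
  have hP := (h1.mul h2).mul h3
  convert hP using 1
  · rfl
  · rfl
  · rfl
  simp only [← ha, Pi.mul_apply]
  rw [Real.rpow_sub ht0, Real.rpow_one, Real.rpow_sub h1a, Real.rpow_one]
  set S := Real.sqrt a with hSdef
  have haS : a = S ^ 2 := (Real.sq_sqrt ha0.le).symm
  rw [haS]
  have hSne : S ≠ 0 := ne_of_gt hS
  have htne : t ≠ 0 := ne_of_gt ht0
  have h1s : (1:ℝ) - S ^ 2 ≠ 0 := by rw [← haS]; exact ne_of_gt h1a
  have hdenS : t + (p - 2) * t * S ^ 2 ≠ 0 := by rw [← haS]; exact ne_of_gt hden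
  have hdenS' : 1 + S ^ 2 * (p - 2) ≠ 0 := by
    intro h; apply hdenS; linear_combination t * h
  field_simp
  simp only [zero_mul]
  symm
  apply mul_eq_zero_of_right
  ring
end

section
/- Let H : [1,r] → ℝ be a positive C² function satisfying the ODE −t·H·(H')² + t²·(H')³ + H²·(2H' + t·H'') = 0 with H' > 0. Then the function g(t) := (t·H'(t)/H(t))² / (1 + (t·H'(t)/H(t))²) satisfies 2g(t) + t·g'(t) = 0, so g(t) = b·t^(−2) for some constant b > 0. -/
open Real Set

theorem p_one_EL_gives_g (r : ℝ) (hr : 1 < r) (H H' H'' : ℝ → ℝ)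
    (hH : ∀ t ∈ Icc 1 r, HasDerivAt H (H' t) t)
    (hH' : ∀ t ∈ Icc 1 r, HasDerivAt H' (H'' t) t)
    (hpos : ∀ t ∈ Icc 1 r, 0 < H t)
    (hinc : ∀ t ∈ Icc 1 r, 0 < H' t)
    (hode : ∀ t ∈ Icc 1 r,
      -t * H t * (H' t) ^ 2 + t ^ 2 * (H' t) ^ 3
        + (H t) ^ 2 * (2 * H' t + t * H'' t) = 0)
    (g : ℝ → ℝ)
    (hg : ∀ t, g t = (t * H' t / H t) ^ 2 / (1 + (t * H' t / H t) ^ 2)) :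
    (∀ t ∈ Ioo 1 r, 2 * g t + t * deriv g t = 0) ∧
      ∃ b > (0 : ℝ), ∀ t ∈ Icc 1 r, g t = b * t ^ (-2 : ℝ) := by
  have hgeq : g = fun s => (s * H' s / H s) ^ 2 / (1 + (s * H' s / H s) ^ 2) :=
    funext hg
  have key : ∀ t ∈ Icc (1:ℝ) r, ∃ d, HasDerivAt g d t ∧ 2 * g t + t * d = 0 := by
    intro t ht
    have hHt := hH t ht
    have hH't := hH' t ht
    have hP := hpos t ht
    have hI := hinc t ht
    have hO := hode t ht
    have ht0 : (0:ℝ) < t := lt_of_lt_of_le one_pos ht.1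
    have hHne : H t ≠ 0 := ne_of_gt hP
    have hu : HasDerivAt (fun s => s * H' s / H s)
        (((1 * H' t + t * H'' t) * H t - t * H' t * H' t) / H t ^ 2) t :=
      ((hasDerivAt_id t).mul hH't).div hHt hHne
    have hdenne : (1 + (t * H' t / H t) ^ 2) ≠ 0 := by positivity
    have h1 := (hu.pow 2).div ((hasDerivAt_const t 1).add (hu.pow 2)) hdenne
    refine ⟨_, hgeq ▸ (show HasDerivAt (fun s => (s * H' s / H s) ^ 2 / (1 + (s * H' s / H s) ^ 2)) _ t from h1), ?_⟩
    · rw [hg t]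
      have hden2 : H t ^ 2 + (t * H' t) ^ 2 ≠ 0 := by positivity
      simp only [Pi.add_apply, Pi.pow_apply, show (2:ℕ) - 1 = 1 from rfl, pow_one]
      field_simp
      linear_combination (2 * t ^ 2 * H' t * H t) * hO
  constructor
  · intro t ht
    obtain ⟨d, hd, he⟩ := key t ⟨le_of_lt ht.1, le_of_lt ht.2⟩
    rw [hd.deriv]; exact he
  · have hF : ∀ t ∈ Icc (1:ℝ) r, HasDerivAt (fun s => s ^ 2 * g s) 0 t := by
      intro t ht
      obtain ⟨d, hd, he⟩ := key t ht
      have h2 : HasDerivAt (fun s => s ^ 2 * g s) (t * (2 * g t + t * d)) t := by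
        refine ((hasDerivAt_pow 2 t).mul hd).congr_deriv ?_
        push_cast
        ring
      rw [he, mul_zero] at h2
      exact h2
    have hconst : ∀ t ∈ Icc (1:ℝ) r, t ^ 2 * g t = 1 ^ 2 * g 1 := by
      have hcont : ContinuousOn (fun s => s ^ 2 * g s) (Icc 1 r) :=
        fun t ht => ((hF t ht).continuousAt).continuousWithinAt
      have := constant_of_has_deriv_right_zero hcont
        (fun t ht => ((hF t (Ico_subset_Icc_self ht)).hasDerivWithinAt))
      intro t ht; exact this t ht
    have h1 : (1:ℝ) ∈ Icc (1:ℝ) r := ⟨le_refl 1, le_of_lt hr⟩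
    have hg1 : 0 < g 1 := by
      rw [hg 1]
      have hP := hpos 1 h1
      have hI := hinc 1 h1
      positivity
    refine ⟨g 1, hg1, ?_⟩
    intro t ht
    have ht0 : (0:ℝ) < t := lt_of_lt_of_le one_pos ht.1
    have h2 : t ^ 2 * g t = g 1 := by simpa using hconst t ht
    have hrpow : t ^ (-2 : ℝ) = (t ^ 2)⁻¹ := by
      rw [show (-2:ℝ) = -(2:ℕ) by norm_num, Real.rpow_neg ht0.le, Real.rpow_natCast]
    rw [hrpow]
    field_simp
    linarith [h2]
end

section
/- For fixed t > 1, the function b ↦ exp(arccot(√(b²−1)) − arccot(√(b²t²−1))), defined for b ≥ 1, is strictly decreasing in b. -/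
open Real Set

noncomputable def arccot (x : ℝ) : ℝ := Real.pi / 2 - Real.arctan x

theorem H_strict_anti_in_b (t : ℝ) (ht : 1 < t) :
    StrictAntiOn (fun b : ℝ => Real.exp (arccot (Real.sqrt (b ^ 2 - 1))
      - arccot (Real.sqrt (b ^ 2 * t ^ 2 - 1)))) (Ici 1) := by
  simp only [arccot]
  apply StrictAntiOn.mono ?_ (le_refl (Ici 1))
  apply strictAntiOn_of_deriv_neg (convex_Ici 1)
  · apply Continuous.continuousOn
    exact Real.continuous_exp.comp (((continuous_const.sub (Real.continuous_arctan.comp (Real.continuous_sqrt.comp (by continuity)))).sub (continuous_const.sub (Real.continuous_arctan.comp (Real.continuous_sqrt.comp (by continuity))))))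
  · intro b hb
    rw [interior_Ici] at hb
    have hb1 : (1:ℝ) < b := hb
    have hb0 : (0:ℝ) < b := lt_trans one_pos hb1
    have ht0 : (0:ℝ) < t := lt_trans one_pos ht
    have hu : (0:ℝ) < b^2 - 1 := by nlinarith
    have hv : (0:ℝ) < b^2*t^2 - 1 := by nlinarith
    set u := Real.sqrt (b^2-1) with hudef
    set v := Real.sqrt (b^2*t^2-1) with hvdef
    have hu0 : 0 < u := Real.sqrt_pos.mpr hu
    have hv0 : 0 < v := Real.sqrt_pos.mpr hv
    have hu2 : u^2 = b^2-1 := Real.sq_sqrt hu.le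
    have hv2 : v^2 = b^2*t^2-1 := Real.sq_sqrt hv.le
    have huv : u < v := by
      apply Real.sqrt_lt_sqrt hu.le
      nlinarith [mul_pos (mul_pos hb0 hb0) (show (0:ℝ) < t^2-1 by nlinarith)]
    have h1 : HasDerivAt (fun x : ℝ => x^2 - 1) (2*b) b := by
      simpa using (hasDerivAt_pow 2 b).sub_const 1
    have h2 : HasDerivAt (fun x : ℝ => x^2*t^2 - 1) (2*b*t^2) b := by
      have := ((hasDerivAt_pow 2 b).mul_const (t^2)).sub_const 1
      simpa [mul_comm, mul_assoc] using this
    have hsu : HasDerivAt (fun x : ℝ => Real.sqrt (x^2-1)) (b/u) b := by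
      have h := (Real.hasDerivAt_sqrt (ne_of_gt hu)).comp b h1
      refine h.congr_deriv ?_
      rw [← hudef]
      field_simp
    have hsv : HasDerivAt (fun x : ℝ => Real.sqrt (x^2*t^2-1)) (b*t^2/v) b := by
      have h := (Real.hasDerivAt_sqrt (ne_of_gt hv)).comp b h2
      refine h.congr_deriv ?_
      rw [← hvdef]
      field_simp
    have hau : HasDerivAt (fun x : ℝ => Real.pi/2 - Real.arctan (Real.sqrt (x^2-1)))
        (-(1/(1+u^2) * (b/u))) b :=
      ((Real.hasDerivAt_arctan u).comp b hsu).const_sub _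
    have hav : HasDerivAt (fun x : ℝ => Real.pi/2 - Real.arctan (Real.sqrt (x^2*t^2-1)))
        (-(1/(1+v^2) * (b*t^2/v))) b :=
      ((Real.hasDerivAt_arctan v).comp b hsv).const_sub _
    have hF : HasDerivAt (fun x : ℝ => Real.exp ((Real.pi/2 - Real.arctan (Real.sqrt (x^2-1)))
        - (Real.pi/2 - Real.arctan (Real.sqrt (x^2*t^2-1)))))
        (Real.exp ((Real.pi/2 - Real.arctan u) - (Real.pi/2 - Real.arctan v)) *
          ((-(1/(1+u^2) * (b/u))) - (-(1/(1+v^2) * (b*t^2/v))))) b :=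
      (hau.sub hav).exp
    rw [hF.deriv]
    apply mul_neg_of_pos_of_neg (Real.exp_pos _)
    have key : (-(1/(1+u^2) * (b/u))) - (-(1/(1+v^2) * (b*t^2/v))) = 1/(b*v) - 1/(b*u) := by
      rw [hu2, hv2]
      have hb2 : b^2 ≠ 0 := by positivity
      have hbt2 : b^2*t^2 ≠ 0 := by positivity
      field_simp
      ring
    rw [key, sub_neg]
    exact one_div_lt_one_div_of_lt (by positivity) (by nlinarith)
end

section
/- Let r > 1 and R > 1. There exists b ≥ 1 such that the function H(t) = exp(arccot(√(b²−1)) − arccot(√(b²t²−1))) maps [1,r] onto [1,R] (i.e., H(r) = R) if and only if log R ≤ π/2 − arctan(1/√(r²−1)). -/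
open Real Set

/-- Key inequality: if `y - x ≤ s * (1 + x * y)` with everything nonneg,
then `arctan y ≤ arctan x + arctan s`. -/
lemma arctan_le_add_of (x y s : ℝ) (hx : 0 ≤ x) (hs : 0 ≤ s)
    (h : y - x ≤ s * (1 + x * y)) : Real.arctan y ≤ Real.arctan x + Real.arctan s := by
  rcases lt_or_ge (x * s) 1 with hxs | hxs
  · rw [Real.arctan_add hxs]
    apply Real.arctan_strictMono.monotone
    rw [le_div_iff₀ (by linarith)]
    nlinarith
  · -- arctan x + arctan s ≥ π/2 > arctan y
    have hs' : 0 < s := by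
      rcases hs.lt_or_eq with h | h
      · exact h
      · exfalso; rw [← h, mul_zero] at hxs; linarith
    have hxinv : s⁻¹ ≤ x := by
      rw [inv_le_iff_one_le_mul₀ hs']
      linarith [mul_comm x s]
    have h1 : Real.arctan s⁻¹ ≤ Real.arctan x := Real.arctan_strictMono.monotone hxinv
    rw [Real.arctan_inv_of_pos hs'] at h1
    linarith [Real.arctan_lt_pi_div_two y]

theorem radial_homeo_existence_iff (r R : ℝ) (hr : 1 < r) (hR : 1 < R) :
    (∃ b : ℝ, 1 ≤ b ∧ Real.exp (arccot (Real.sqrt (b ^ 2 - 1))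
        - arccot (Real.sqrt (b ^ 2 * r ^ 2 - 1))) = R)
      ↔ Real.log R ≤ Real.pi / 2 - Real.arctan (1 / Real.sqrt (r ^ 2 - 1)) := by
  have hr0 : (0:ℝ) < r := by linarith
  have hs2 : (0:ℝ) < r ^ 2 - 1 := by nlinarith
  set s : ℝ := Real.sqrt (r ^ 2 - 1) with hs_def
  have hs_pos : 0 < s := Real.sqrt_pos.mpr hs2
  have hs_sq : s ^ 2 = r ^ 2 - 1 := Real.sq_sqrt hs2.le
  -- the RHS equals arctan s
  have hRHS : Real.pi / 2 - Real.arctan (1 / s) = Real.arctan s := by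
    rw [one_div, Real.arctan_inv_of_pos hs_pos]; ring
  rw [hRHS]
  -- the function g
  set g : ℝ → ℝ := fun b =>
      Real.arctan (Real.sqrt (b ^ 2 * r ^ 2 - 1)) - Real.arctan (Real.sqrt (b ^ 2 - 1))
    with hg_def
  have hgeq : ∀ b : ℝ, arccot (Real.sqrt (b ^ 2 - 1))
      - arccot (Real.sqrt (b ^ 2 * r ^ 2 - 1)) = g b := by
    intro b; simp only [arccot, hg_def]; ring
  have hg1 : g 1 = Real.arctan s := by
    simp [hg_def, hs_def]
  constructor
  · rintro ⟨b, hb1, hb⟩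
    rw [hgeq b] at hb
    have hlog : Real.log R = g b := by rw [← hb, Real.log_exp]
    rw [hlog]
    -- show g b ≤ arctan s
    set x : ℝ := Real.sqrt (b ^ 2 - 1) with hx_def
    set y : ℝ := Real.sqrt (b ^ 2 * r ^ 2 - 1) with hy_def
    have hb2 : (0:ℝ) ≤ b ^ 2 - 1 := by nlinarith
    have hby2 : (0:ℝ) ≤ b ^ 2 * r ^ 2 - 1 := by nlinarith
    have hx0 : 0 ≤ x := Real.sqrt_nonneg _
    have hy0 : 0 ≤ y := Real.sqrt_nonneg _
    have hx_sq : x ^ 2 = b ^ 2 - 1 := Real.sq_sqrt hb2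
    have hy_sq : y ^ 2 = b ^ 2 * r ^ 2 - 1 := Real.sq_sqrt hby2
    have hy_le : y ≤ x * r + s := by
      nlinarith [mul_nonneg hx0 hr0.le, mul_nonneg (mul_nonneg hx0 hr0.le) hs_pos.le]
    have hy_ge_s : s ≤ y := by nlinarith
    have hkey : y - x ≤ s * (1 + x * y) := by
      nlinarith [mul_le_mul_of_nonneg_left (mul_le_mul_of_nonneg_left hy_ge_s hs_pos.le) hx0]
    have := arctan_le_add_of x y s hx0 hs_pos.le hkey
    simp only [hg_def]
    linarith
  · intro hle
    have hlogR : 0 < Real.log R := Real.log_pos hR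
    have hlt : Real.log R < Real.pi / 2 :=
      lt_of_le_of_lt hle (Real.arctan_lt_pi_div_two s)
    set θ : ℝ := Real.pi / 2 - Real.log R with hθ_def
    have hθ1 : 0 < θ := by simp only [hθ_def]; linarith
    have hθ2 : θ < Real.pi / 2 := by simp only [hθ_def]; linarith
    set t : ℝ := Real.tan θ with ht_def
    have ht0 : 0 ≤ t := Real.tan_nonneg_of_nonneg_of_le_pi_div_two hθ1.le hθ2.le
    have hat : Real.arctan t = θ := Real.arctan_tan (by linarith [Real.pi_pos]) hθ2
    set B : ℝ := Real.sqrt (t ^ 2 + 1) with hB_def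
    have hB1 : 1 ≤ B := by
      rw [hB_def]
      have h1 : (1:ℝ) ≤ t ^ 2 + 1 := by nlinarith [sq_nonneg t]
      calc (1:ℝ) = Real.sqrt 1 := by simp
        _ ≤ Real.sqrt (t ^ 2 + 1) := Real.sqrt_le_sqrt h1
    have hB_sq : B ^ 2 = t ^ 2 + 1 := Real.sq_sqrt (by positivity)
    have hgB : g B ≤ Real.log R := by
      have : Real.sqrt (B ^ 2 - 1) = t := by
        rw [hB_sq, show t ^ 2 + 1 - 1 = t ^ 2 by ring, Real.sqrt_sq ht0]
      simp only [hg_def, this, hat]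
      have := Real.arctan_lt_pi_div_two (Real.sqrt (B ^ 2 * r ^ 2 - 1))
      simp only [hθ_def] at *
      linarith
    have hcont : ContinuousOn g (Icc 1 B) := by
      apply Continuous.continuousOn
      simp only [hg_def]
      exact (Real.continuous_arctan.comp ((continuous_pow 2).mul continuous_const |>.sub continuous_const).sqrt).sub
        (Real.continuous_arctan.comp (((continuous_pow 2).sub continuous_const).sqrt))
    have hmem : Real.log R ∈ Icc (g B) (g 1) := ⟨hgB, by rw [hg1]; exact hle⟩
    obtain ⟨b, hbmem, hbeq⟩ := intermediate_value_Icc' hB1 hcont hmem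
    refine ⟨b, hbmem.1, ?_⟩
    rw [hgeq b, hbeq, Real.exp_log (by linarith)]
end

section
/- Let b ≥ 1 and r > 1. For every C¹ increasing function H : [1,r] → ℝ with H(1) = 1, H(r) = R, H > 0, the inequality ∫₁^r √(1 + t²·H'(t)²/H(t)²) dt ≥ ∫₁^r √(1 − 1/(b²t²)) dt + (1/b)·log R holds. -/
open Real Set intervalIntegral

theorem energy_lower_bound_p_one (b r R : ℝ) (hb : 1 ≤ b) (hr : 1 < r)
    (H H' : ℝ → ℝ)
    (hH : ∀ t ∈ Icc 1 r, HasDerivAt H (H' t) t)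
    (hH'c : ContinuousOn H' (Icc 1 r))
    (hinc : ∀ t ∈ Icc 1 r, 0 ≤ H' t)
    (hpos : ∀ t ∈ Icc 1 r, 0 < H t)
    (h1 : H 1 = 1) (hrR : H r = R) :
    ∫ t in (1 : ℝ)..r, Real.sqrt (1 + t ^ 2 * (H' t) ^ 2 / (H t) ^ 2)
      ≥ (∫ t in (1 : ℝ)..r, Real.sqrt (1 - 1 / (b ^ 2 * t ^ 2)))
        + (1 / b) * Real.log R := by
  have hb0 : (0:ℝ) < b := lt_of_lt_of_le one_pos hb
  have hIcc : uIcc (1:ℝ) r = Icc 1 r := uIcc_of_le hr.le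
  have hHc : ContinuousOn H (Icc 1 r) := fun t ht =>
    (hH t ht).continuousAt.continuousWithinAt
  have hHne : ∀ t ∈ Icc 1 r, H t ≠ 0 := fun t ht => (hpos t ht).ne'
  -- log derivative
  have hlog : ∀ t ∈ Icc 1 r, HasDerivAt (fun s => Real.log (H s)) (H' t / H t) t :=
    fun t ht => (hH t ht).log (hHne t ht)
  have hcq : ContinuousOn (fun t => H' t / H t) (Icc 1 r) :=
    hH'c.div hHc hHne
  have hlogint : (∫ t in (1:ℝ)..r, H' t / H t) = Real.log R := by
    rw [intervalIntegral.integral_eq_sub_of_hasDerivAt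
      (fun t ht => hlog t (hIcc ▸ ht)) ((hcq.intervalIntegrable_of_Icc hr.le))]
    rw [hrR, h1, Real.log_one, sub_zero]
  -- continuity and integrability of the three integrands
  have hf : ContinuousOn (fun t => Real.sqrt (1 + t ^ 2 * (H' t) ^ 2 / (H t) ^ 2))
      (Icc 1 r) := by
    apply ContinuousOn.sqrt
    exact continuousOn_const.add ((((continuousOn_id.pow 2).mul (hH'c.pow 2)).div
      (hHc.pow 2) (fun t ht => pow_ne_zero 2 (hHne t ht))))
  have hg : ContinuousOn (fun t : ℝ => Real.sqrt (1 - 1 / (b ^ 2 * t ^ 2))) (Icc 1 r) := by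
    apply ContinuousOn.sqrt
    apply continuousOn_const.sub
    apply continuousOn_const.div (by fun_prop)
    intro t ht
    have ht0 : (0:ℝ) < t := lt_of_lt_of_le one_pos ht.1
    positivity
  have hfint : IntervalIntegrable
      (fun t => Real.sqrt (1 + t ^ 2 * (H' t) ^ 2 / (H t) ^ 2)) MeasureTheory.volume 1 r :=
    hf.intervalIntegrable_of_Icc hr.le
  have hgint : IntervalIntegrable
      (fun t : ℝ => Real.sqrt (1 - 1 / (b ^ 2 * t ^ 2))) MeasureTheory.volume 1 r :=
    hg.intervalIntegrable_of_Icc hr.le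
  have hqint : IntervalIntegrable (fun t => (1/b) * (H' t / H t)) MeasureTheory.volume 1 r :=
    (hcq.intervalIntegrable_of_Icc hr.le).const_mul _
  -- pointwise inequality
  have key : ∀ t ∈ Icc (1:ℝ) r,
      Real.sqrt (1 - 1 / (b ^ 2 * t ^ 2)) + (1/b) * (H' t / H t)
        ≤ Real.sqrt (1 + t ^ 2 * (H' t) ^ 2 / (H t) ^ 2) := by
    intro t ht
    have ht1 : (1:ℝ) ≤ t := ht.1
    have ht0 : (0:ℝ) < t := lt_of_lt_of_le one_pos ht1
    have hHt : 0 < H t := hpos t ht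
    have hH't : 0 ≤ H' t := hinc t ht
    set c : ℝ := Real.sqrt (1 - 1 / (b ^ 2 * t ^ 2)) with hc
    set s : ℝ := 1 / (b * t) with hs
    have hbt : (1:ℝ) ≤ b * t := one_le_mul_of_one_le_of_one_le hb ht1
    have hbt0 : (0:ℝ) < b * t := lt_of_lt_of_le one_pos hbt
    have harg : (0:ℝ) ≤ 1 - 1 / (b ^ 2 * t ^ 2) := by
      have : (1:ℝ) ≤ b ^ 2 * t ^ 2 := by nlinarith
      have h2 : 1 / (b ^ 2 * t ^ 2) ≤ 1 := by
        rw [div_le_one (by positivity)]; exact this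
      linarith
    have hcs : c ^ 2 + s ^ 2 = 1 := by
      rw [hc, hs, Real.sq_sqrt harg, div_pow, one_pow, mul_pow]
      field_simp; ring
    have hc0 : 0 ≤ c := Real.sqrt_nonneg _
    have hs0 : 0 ≤ s := by positivity
    set B : ℝ := t * H' t / H t with hB
    have hB0 : 0 ≤ B := by positivity
    have hval : 1 + t ^ 2 * (H' t) ^ 2 / (H t) ^ 2 = 1 ^ 2 + B ^ 2 := by
      rw [hB]; field_simp
    have hsq : (c * 1 + s * B) ^ 2 ≤ 1 ^ 2 + B ^ 2 := by nlinarith [sq_nonneg (s * 1 - c * B)]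
    have hle : c * 1 + s * B ≤ Real.sqrt (1 ^ 2 + B ^ 2) := by
      rw [← Real.sqrt_sq (by positivity : (0:ℝ) ≤ c * 1 + s * B)]
      exact Real.sqrt_le_sqrt hsq
    have hsB : s * B = (1/b) * (H' t / H t) := by
      rw [hs, hB]; field_simp
    calc c + (1/b) * (H' t / H t) = c * 1 + s * B := by rw [hsB]; ring
      _ ≤ Real.sqrt (1 ^ 2 + B ^ 2) := hle
      _ = Real.sqrt (1 + t ^ 2 * (H' t) ^ 2 / (H t) ^ 2) := by rw [hval]
  have hmono : (∫ t in (1:ℝ)..r, (Real.sqrt (1 - 1 / (b ^ 2 * t ^ 2)) + (1/b) * (H' t / H t)))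
      ≤ ∫ t in (1:ℝ)..r, Real.sqrt (1 + t ^ 2 * (H' t) ^ 2 / (H t) ^ 2) := by
    apply intervalIntegral.integral_mono_on hr.le (hgint.add hqint) hfint
    exact key
  rw [intervalIntegral.integral_add hgint hqint, intervalIntegral.integral_const_mul,
    hlogint] at hmono
  exact hmono
end

section
/- Let 1 < p < 2, r > 1, and let h(z) = H(t)e^{iθ} (z = t·e^{iθ}) be a radial map with H : [1,r] → [1,R] a C¹ increasing bijection. Suppose g : [1,r] → (0,1) satisfies g'(t) = 2(2-p)(g(t)-1)g(t)/(t+(p-2)tg(t)) and H₀ satisfies t·H₀'(t)/H₀(t) = √(g(t))/√(1−g(t)) with H₀(1)=1, H₀(r)=R. Then ∫₁^r t·(1/t² + H'(t)²/H(t)²)^{p/2} dt ≥ ∫₁^r t·(1/t² + H₀'(t)²/H₀(t)²)^{p/2} dt. -/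
open Real Set intervalIntegral

lemma jensen2 {q a b s : ℝ} (hq0 : 0 < q) (hq1 : q < 1) (ha : 0 ≤ a) (hb : 0 ≤ b)
    (hs0 : 0 < s) (hs1 : s < 1) :
    (1 - s) ^ (1 - q) * a ^ q + s ^ (1 - q) * b ^ q ≤ (a + b) ^ q := by
  have h1s : (0:ℝ) < 1 - s := by linarith
  have key := (Real.concaveOn_rpow hq0.le hq1.le).2
    (x := a / (1 - s)) (y := b / s)
    (by exact mem_Ici.2 (by positivity)) (by exact mem_Ici.2 (by positivity))
    h1s.le hs0.le (by ring)
  have e1 : (1 - s) * (a / (1 - s)) + s * (b / s) = a + b := by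
    field_simp
  simp only [smul_eq_mul] at key
  rw [e1] at key
  refine le_trans (le_of_eq ?_) key
  have d1 : (a / (1 - s)) ^ q = a ^ q / (1 - s) ^ q := Real.div_rpow ha h1s.le q
  have d2 : (b / s) ^ q = b ^ q / s ^ q := Real.div_rpow hb hs0.le q
  have r1 : (1 - s) ^ (1 - q) = (1 - s) / (1 - s) ^ q := by
    rw [Real.rpow_sub h1s, Real.rpow_one]
  have r2 : s ^ (1 - q) = s / s ^ q := by
    rw [Real.rpow_sub hs0, Real.rpow_one]
  have p1 : (0:ℝ) < (1 - s) ^ q := Real.rpow_pos_of_pos h1s q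
  have p2 : (0:ℝ) < s ^ q := Real.rpow_pos_of_pos hs0 q
  rw [d1, d2, r1, r2]
  field_simp

lemma tangent_line {p x u : ℝ} (hp : 1 ≤ p) (hx : 0 < x) (hu : 0 ≤ u) :
    x ^ p + p * x ^ (p - 1) * (u - x) ≤ u ^ p := by
  have hs : -1 ≤ u / x - 1 := by
    have : 0 ≤ u / x := by positivity
    linarith
  have hb := one_add_mul_self_le_rpow_one_add hs hp
  have e : 1 + (u / x - 1) = u / x := by ring
  rw [e, Real.div_rpow hu hx.le] at hb
  have hxp : (0:ℝ) < x ^ p := Real.rpow_pos_of_pos hx p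
  have hxp1 : x ^ (p - 1) = x ^ p / x := by
    rw [Real.rpow_sub hx, Real.rpow_one]
  rw [hxp1]
  have := mul_le_mul_of_nonneg_left hb hxp.le
  rw [mul_div_cancel₀ _ (ne_of_gt hxp)] at this
  calc x ^ p + p * (x ^ p / x) * (u - x)
      = x ^ p * (1 + p * (u / x - 1)) := by field_simp
    _ ≤ u ^ p := this

theorem radial_p_energy_minimization (p r R : ℝ) (hp1 : 1 < p) (hp2 : p < 2)
    (hr : 1 < r) (hR : 1 < R)
    (g : ℝ → ℝ)
    (hgrange : ∀ t ∈ Icc 1 r, g t ∈ Ioo (0 : ℝ) 1)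
    (hgode : ∀ t ∈ Icc 1 r,
      HasDerivAt g (2 * (2 - p) * (g t - 1) * g t / (t + (p - 2) * t * g t)) t)
    (H H' : ℝ → ℝ)
    (hH : ∀ t ∈ Icc 1 r, HasDerivAt H (H' t) t)
    (hH'c : ContinuousOn H' (Icc 1 r))
    (hHinc : StrictMonoOn H (Icc 1 r))
    (hHpos : ∀ t ∈ Icc 1 r, 0 < H t)
    (hH1 : H 1 = 1) (hHr : H r = R)
    (H₀ H₀' : ℝ → ℝ)
    (hH₀ : ∀ t ∈ Icc 1 r, HasDerivAt H₀ (H₀' t) t)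
    (hH₀pos : ∀ t ∈ Icc 1 r, 0 < H₀ t)
    (hH₀ode : ∀ t ∈ Icc 1 r,
      t * H₀' t / H₀ t = Real.sqrt (g t) / Real.sqrt (1 - g t))
    (hH₀1 : H₀ 1 = 1) (hH₀r : H₀ r = R) :
    ∫ t in (1 : ℝ)..r, t * (1 / t ^ 2 + (H' t) ^ 2 / (H t) ^ 2) ^ (p / 2)
      ≥ ∫ t in (1 : ℝ)..r, t * (1 / t ^ 2 + (H₀' t) ^ 2 / (H₀ t) ^ 2) ^ (p / 2) := by
  have hq0 : (0:ℝ) < p / 2 := by linarith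
  have hq1 : p / 2 < 1 := by linarith
  have huIcc : uIcc (1:ℝ) r = Icc 1 r := uIcc_of_le hr.le
  set ψ : ℝ → ℝ := fun t => Real.sqrt (g t) / (t * Real.sqrt (1 - g t)) with hψdef
  set Q : ℝ → ℝ := fun t => (2 - p) * Real.log t + (1/2) * Real.log (g t)
    + ((1 - p)/2) * Real.log (1 - g t) with hQdef
  set c : ℝ := p * Real.exp (Q 1) with hcdef
  -- basic positivity facts
  have ht0 : ∀ t ∈ Icc (1:ℝ) r, (0:ℝ) < t := fun t ht => lt_of_lt_of_le zero_lt_one ht.1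
  have hg0 : ∀ t ∈ Icc (1:ℝ) r, 0 < g t := fun t ht => (hgrange t ht).1
  have hg1 : ∀ t ∈ Icc (1:ℝ) r, 0 < 1 - g t := fun t ht => by
    have := (hgrange t ht).2; linarith
  have hψpos : ∀ t ∈ Icc (1:ℝ) r, 0 < ψ t := fun t ht => by
    have h1 := hg0 t ht; have h2 := hg1 t ht; have h3 := ht0 t ht
    have : 0 < Real.sqrt (g t) := Real.sqrt_pos.2 h1
    have : 0 < Real.sqrt (1 - g t) := Real.sqrt_pos.2 h2
    simp only [hψdef]
    positivity
  have hgcont : ContinuousOn g (Icc 1 r) := fun t ht =>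
    ((hgode t ht).continuousAt).continuousWithinAt
  have hHcont : ContinuousOn H (Icc 1 r) := fun t ht =>
    ((hH t ht).continuousAt).continuousWithinAt
  have hH₀cont : ContinuousOn H₀ (Icc 1 r) := fun t ht =>
    ((hH₀ t ht).continuousAt).continuousWithinAt
  have hψcont : ContinuousOn ψ (Icc 1 r) := by
    apply ContinuousOn.div
    · exact Real.continuous_sqrt.comp_continuousOn hgcont
    · exact (continuousOn_id).mul
        (Real.continuous_sqrt.comp_continuousOn (continuousOn_const.sub hgcont))
    · intro t ht
      have h3 := ht0 t ht
      have h2 := Real.sqrt_pos.2 (hg1 t ht)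
      positivity
  -- relation H₀'/H₀ = ψ
  have hrel : ∀ t ∈ Icc (1:ℝ) r, H₀' t / H₀ t = ψ t := by
    intro t ht
    have hode := hH₀ode t ht
    have htne : t ≠ 0 := (ht0 t ht).ne'
    have hH₀ne : H₀ t ≠ 0 := (hH₀pos t ht).ne'
    rw [mul_div_assoc] at hode
    have h2 : H₀' t / H₀ t = (Real.sqrt (g t) / Real.sqrt (1 - g t)) / t := by
      rw [eq_div_iff htne, mul_comm]; exact hode
    simp only [hψdef]
    rw [h2, div_div, mul_comm]
  -- constancy of Q
  have hQconst : ∀ t ∈ Icc (1:ℝ) r, Q t = Q 1 := by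
    apply constant_of_has_deriv_right_zero
    · rw [hQdef]
      exact ((continuousOn_const.mul (continuousOn_id.log (fun t ht => (ht0 t ht).ne'))).add
        (continuousOn_const.mul (hgcont.log (fun t ht => (hg0 t ht).ne')))).add
        (continuousOn_const.mul ((continuousOn_const.sub hgcont).log
          (fun t ht => (hg1 t ht).ne')))
    · intro x hx
      have hx' : x ∈ Icc (1:ℝ) r := ⟨hx.1, hx.2.le⟩
      have hx0 : (0:ℝ) < x := ht0 x hx'
      have hG0 := hg0 x hx'
      have hG1 := hg1 x hx'
      have hgd := hgode x hx'
      have hpos : (0:ℝ) < 1 + (p - 2) * g x := by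
        nlinarith [mul_pos (sub_pos.2 hp1) hG0]
      have hden : x + (p - 2) * x * g x ≠ 0 := by nlinarith [mul_pos hx0 hpos]
      have d1 : HasDerivAt (fun t => (2 - p) * Real.log t) ((2 - p) * x⁻¹) x :=
        (Real.hasDerivAt_log hx0.ne').const_mul (2 - p)
      have d2 : HasDerivAt (fun t => (1/2) * Real.log (g t))
          ((1/2) * ((2 * (2 - p) * (g x - 1) * g x / (x + (p - 2) * x * g x)) / g x)) x :=
        (hgd.log hG0.ne').const_mul (1/2)
      have d3 : HasDerivAt (fun t => ((1 - p)/2) * Real.log (1 - g t))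
          (((1 - p)/2) * ((0 - (2 * (2 - p) * (g x - 1) * g x / (x + (p - 2) * x * g x)))
            / (1 - g x))) x :=
        (((hasDerivAt_const x (1:ℝ)).sub hgd).log hG1.ne').const_mul ((1 - p)/2)
      have D := (d1.add d2).add d3
      have hzero : (2 - p) * x⁻¹
          + (1/2) * ((2 * (2 - p) * (g x - 1) * g x / (x + (p - 2) * x * g x)) / g x)
          + ((1 - p)/2) * ((0 - (2 * (2 - p) * (g x - 1) * g x / (x + (p - 2) * x * g x)))
            / (1 - g x)) = 0 := by
        have hne : 1 + g x * (p - 2) ≠ 0 := by rw [mul_comm]; exact hpos.ne'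
        field_simp
        ring
      rw [hQdef]
      exact (hzero ▸ D).hasDerivWithinAt
  -- key identity
  have hkey : ∀ t ∈ Icc (1:ℝ) r, t * (g t) ^ (1 - p/2) * (p * (ψ t) ^ (p - 1)) = c := by
    intro t ht
    have hG0 := hg0 t ht
    have hG1 := hg1 t ht
    have hT := ht0 t ht
    have hψp := hψpos t ht
    have hp0 : (0:ℝ) < p := by linarith
    have hlogψ : Real.log (ψ t)
        = (1/2) * Real.log (g t) - Real.log t - (1/2) * Real.log (1 - g t) := by
      simp only [hψdef]
      rw [Real.log_div (Real.sqrt_ne_zero'.2 hG0) (by positivity),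
          Real.log_mul hT.ne' (Real.sqrt_ne_zero'.2 hG1),
          Real.log_sqrt hG0.le, Real.log_sqrt hG1.le]
      ring
    have hLpos : 0 < t * (g t) ^ (1 - p/2) * (p * (ψ t) ^ (p - 1)) := by
      have := Real.rpow_pos_of_pos hG0 (1 - p/2)
      have := Real.rpow_pos_of_pos hψp (p - 1)
      positivity
    have hRpos : (0:ℝ) < p * Real.exp (Q t) := by positivity
    have hlog : Real.log (t * (g t) ^ (1 - p/2) * (p * (ψ t) ^ (p - 1)))
        = Real.log (p * Real.exp (Q t)) := by
      rw [Real.log_mul (by positivity : (0:ℝ) < t * (g t) ^ (1 - p/2)).ne'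
            (by positivity : (0:ℝ) < p * (ψ t) ^ (p - 1)).ne',
          Real.log_mul hT.ne' (Real.rpow_pos_of_pos hG0 _).ne',
          Real.log_mul hp0.ne' (Real.rpow_pos_of_pos hψp _).ne',
          Real.log_mul hp0.ne' (Real.exp_ne_zero _),
          Real.log_rpow hG0, Real.log_rpow hψp, Real.log_exp, hlogψ, hQdef]
      ring
    have hfin := congrArg Real.exp hlog
    rw [Real.exp_log hLpos, Real.exp_log hRpos] at hfin
    rw [hfin, hcdef, hQconst t ht]
  -- pointwise inequality
  have hpt : ∀ t ∈ Icc (1:ℝ) r,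
      t * (1 / t ^ 2 + (ψ t) ^ 2) ^ (p/2) + c * (H' t / H t - ψ t)
        ≤ t * (1 / t ^ 2 + (H' t) ^ 2 / (H t) ^ 2) ^ (p/2) := by
    intro t ht
    have hG0 := hg0 t ht
    have hG1 := hg1 t ht
    have hT := ht0 t ht
    have hX0 : 0 < ψ t := hψpos t ht
    have hp0 : (0:ℝ) < p := by linarith
    have hHne : H t ≠ 0 := (hHpos t ht).ne'
    set X := ψ t with hXdef
    set A : ℝ := 1 / t ^ 2 with hAdef
    set B : ℝ := (H' t) ^ 2 / (H t) ^ 2 with hBdef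
    set u : ℝ := |H' t / H t| with hudef
    have hA0 : 0 < A := by rw [hAdef]; positivity
    have hB0 : 0 ≤ B := by rw [hBdef]; positivity
    have hu0 : 0 ≤ u := abs_nonneg _
    have hBu : B = u ^ 2 := by rw [hBdef, hudef, sq_abs, div_pow]
    have hBq : B ^ (p/2) = u ^ p := by
      rw [hBu, ← Real.rpow_natCast u 2, ← Real.rpow_mul hu0]
      congr 1
      ring
    have hJ := jensen2 hq0 hq1 hA0.le hB0 hG0 (hgrange t ht).2
    have htan := tangent_line hp1.le hX0 hu0
    have hkey' := hkey t ht
    rw [← hXdef] at hkey'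
    -- identity for the minimizer
    have h2 : X ^ 2 = g t / (t ^ 2 * (1 - g t)) := by
      rw [hXdef]
      simp only [hψdef]
      rw [div_pow, mul_pow, Real.sq_sqrt hG0.le, Real.sq_sqrt hG1.le]
    have hXp : X ^ p = (g t) ^ (p/2) / (t ^ 2 * (1 - g t)) ^ (p/2) := by
      have e1 : X ^ p = (X ^ 2) ^ (p/2) := by
        rw [← Real.rpow_natCast X 2, ← Real.rpow_mul hX0.le]
        congr 1
        ring
      rw [e1, h2, Real.div_rpow hG0.le (by positivity)]
    have hAq : A ^ (p/2) = 1 / (t ^ 2) ^ (p/2) := by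
      rw [hAdef, Real.div_rpow zero_le_one (by positivity), Real.one_rpow]
    have hSum : A + X ^ 2 = 1 / (t ^ 2 * (1 - g t)) := by
      rw [hAdef, h2]
      field_simp
      ring
    have hL : (A + X ^ 2) ^ (p/2) = 1 / (t ^ 2 * (1 - g t)) ^ (p/2) := by
      rw [hSum, Real.div_rpow zero_le_one (by positivity), Real.one_rpow]
    have hD : (t ^ 2 * (1 - g t)) ^ (p/2) = (t ^ 2) ^ (p/2) * (1 - g t) ^ (p/2) :=
      Real.mul_rpow (by positivity) hG1.le
    have r1 : (1 - g t) ^ (1 - p/2) = (1 - g t) / (1 - g t) ^ (p/2) := by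
      rw [Real.rpow_sub hG1, Real.rpow_one]
    have r2 : (g t) ^ (1 - p/2) = g t / (g t) ^ (p/2) := by
      rw [Real.rpow_sub hG0, Real.rpow_one]
    have p1 : (0:ℝ) < (t ^ 2) ^ (p/2) := Real.rpow_pos_of_pos (by positivity) _
    have p2 : (0:ℝ) < (1 - g t) ^ (p/2) := Real.rpow_pos_of_pos hG1 _
    have p3 : (0:ℝ) < (g t) ^ (p/2) := Real.rpow_pos_of_pos hG0 _
    have hid : (A + X ^ 2) ^ (p/2)
        = (1 - g t) ^ (1 - p/2) * A ^ (p/2) + (g t) ^ (1 - p/2) * X ^ p := by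
      rw [hL, hXp, hAq, hD, r1, r2]
      field_simp
      ring
    have hfac1 : 0 ≤ t * (g t) ^ (1 - p/2) * (p * X ^ (p - 1)) := by
      have := Real.rpow_pos_of_pos hG0 (1 - p/2)
      have := Real.rpow_pos_of_pos hX0 (p - 1)
      positivity
    have hfac2 : 0 ≤ t * (g t) ^ (1 - p/2) := by
      have := Real.rpow_pos_of_pos hG0 (1 - p/2)
      positivity
    have habs : H' t / H t - X ≤ u - X := sub_le_sub_right (le_abs_self _) X
    calc t * (A + X ^ 2) ^ (p/2) + c * (H' t / H t - X)
        = t * ((1 - g t) ^ (1 - p/2) * A ^ (p/2))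
          + t * (g t) ^ (1 - p/2) * X ^ p
          + (t * (g t) ^ (1 - p/2) * (p * X ^ (p - 1))) * (H' t / H t - X) := by
          rw [hid, ← hkey']
          ring
      _ ≤ t * ((1 - g t) ^ (1 - p/2) * A ^ (p/2))
          + t * (g t) ^ (1 - p/2) * X ^ p
          + (t * (g t) ^ (1 - p/2) * (p * X ^ (p - 1))) * (u - X) := by
          have := mul_le_mul_of_nonneg_left habs hfac1
          linarith
      _ = t * ((1 - g t) ^ (1 - p/2) * A ^ (p/2))
          + (t * (g t) ^ (1 - p/2)) * (X ^ p + p * X ^ (p - 1) * (u - X)) := by ring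
      _ ≤ t * ((1 - g t) ^ (1 - p/2) * A ^ (p/2))
          + (t * (g t) ^ (1 - p/2)) * u ^ p := by
          have := mul_le_mul_of_nonneg_left htan hfac2
          linarith
      _ = t * ((1 - g t) ^ (1 - p/2) * A ^ (p/2) + (g t) ^ (1 - p/2) * B ^ (p/2)) := by
          rw [hBq]; ring
      _ ≤ t * (A + B) ^ (p/2) := mul_le_mul_of_nonneg_left hJ (le_of_lt hT)
  -- integrability
  have hle1r : (1:ℝ) ≤ r := hr.le
  have hIntf : IntervalIntegrable
      (fun t => t * (1 / t ^ 2 + (H' t) ^ 2 / (H t) ^ 2) ^ (p/2)) MeasureTheory.volume 1 r := by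
    apply ContinuousOn.intervalIntegrable
    rw [huIcc]
    apply ContinuousOn.mul continuousOn_id
    apply ContinuousOn.rpow_const
    · apply ContinuousOn.add
      · exact continuousOn_const.div (continuousOn_id.pow 2)
          (fun t ht => pow_ne_zero 2 (ht0 t ht).ne')
      · exact (hH'c.pow 2).div (hHcont.pow 2)
          (fun t ht => pow_ne_zero 2 (hHpos t ht).ne')
    · intro t ht; right; exact hq0.le
  have hIntχ : IntervalIntegrable (fun t => H' t / H t - ψ t) MeasureTheory.volume 1 r := by
    apply ContinuousOn.intervalIntegrable
    rw [huIcc]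
    exact (hH'c.div hHcont (fun t ht => (hHpos t ht).ne')).sub hψcont
  have hIntf₀ : IntervalIntegrable
      (fun t => t * (1 / t ^ 2 + (ψ t) ^ 2) ^ (p/2)) MeasureTheory.volume 1 r := by
    apply ContinuousOn.intervalIntegrable
    rw [huIcc]
    apply ContinuousOn.mul continuousOn_id
    apply ContinuousOn.rpow_const
    · exact (continuousOn_const.div (continuousOn_id.pow 2)
        (fun t ht => pow_ne_zero 2 (ht0 t ht).ne')).add (hψcont.pow 2)
    · intro t ht; right; exact hq0.le
  -- the χ integral vanishes
  have hχzero : (∫ t in (1:ℝ)..r, (H' t / H t - ψ t)) = 0 := by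
    have hderiv : ∀ t ∈ uIcc (1:ℝ) r,
        HasDerivAt (fun s => Real.log (H s) - Real.log (H₀ s)) (H' t / H t - ψ t) t := by
      intro t ht
      rw [huIcc] at ht
      have d1 : HasDerivAt (fun s => Real.log (H s)) (H' t / H t) t :=
        (hH t ht).log (hHpos t ht).ne'
      have d2 : HasDerivAt (fun s => Real.log (H₀ s)) (H₀' t / H₀ t) t :=
        (hH₀ t ht).log (hH₀pos t ht).ne'
      have := d1.sub d2
      rwa [hrel t ht] at this
    rw [integral_eq_sub_of_hasDerivAt hderiv hIntχ]
    rw [hHr, hH1, hH₀r, hH₀1]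
    ring
  -- conclude
  have hmono := integral_mono_on hle1r
    ((hIntf₀.add (hIntχ.const_mul c))) hIntf
    (fun t ht => by simpa using hpt t ht)
  have hsplit : (∫ t in (1:ℝ)..r,
      ((fun t => t * (1 / t ^ 2 + (ψ t) ^ 2) ^ (p/2)) t + (fun t => c * (H' t / H t - ψ t)) t))
      = (∫ t in (1:ℝ)..r, t * (1 / t ^ 2 + (ψ t) ^ 2) ^ (p/2)) := by
    rw [integral_add hIntf₀ (hIntχ.const_mul c), integral_const_mul, hχzero]
    ring
  have hcongr : (∫ t in (1:ℝ)..r, t * (1 / t ^ 2 + (H₀' t) ^ 2 / (H₀ t) ^ 2) ^ (p/2))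
      = (∫ t in (1:ℝ)..r, t * (1 / t ^ 2 + (ψ t) ^ 2) ^ (p/2)) := by
    apply integral_congr
    intro t ht
    rw [huIcc] at ht
    show t * (1 / t ^ 2 + (H₀' t) ^ 2 / (H₀ t) ^ 2) ^ (p/2)
      = t * (1 / t ^ 2 + (ψ t) ^ 2) ^ (p/2)
    rw [← div_pow, hrel t ht]
  rw [ge_iff_le, hcongr]
  calc (∫ t in (1:ℝ)..r, t * (1 / t ^ 2 + (ψ t) ^ 2) ^ (p/2))
      = _ := hsplit.symm
    _ ≤ _ := hmono
end

section
/- Let r > 1 and suppose log R > π/2 − arctan(1/√(r²−1)). Then there is no b ≥ 1 and no solution H of t·H'(t)/H(t) = 1/√(b²t²−1) on [1,r] with H(1) = 1 and H(r) = R; consequently, no radial homeomorphic critical point of the weighted 1-Dirichlet energy exists between A(1,r) and A(1,R). -/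
open Real Set Filter Topology

lemma aux_one_le {b t : ℝ} (hb : 1 ≤ b) (ht : 1 ≤ t) : 1 ≤ b ^ 2 * t ^ 2 := by
  have h1 : (1:ℝ) * 1 ≤ b * t := mul_le_mul hb ht zero_le_one (le_trans zero_le_one hb)
  nlinarith

lemma aux_one_lt {b t : ℝ} (hb : 1 ≤ b) (ht : 1 < t) : 1 < b ^ 2 * t ^ 2 := by
  have h1 : (1:ℝ) < t ^ 2 := by nlinarith
  have h2 : (1:ℝ) ≤ b ^ 2 := by nlinarith
  nlinarith

lemma key_arctan_ineq (b r : ℝ) (hb : 1 ≤ b) (hr : 1 < r) :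
    Real.arctan (Real.sqrt (b ^ 2 * r ^ 2 - 1)) - Real.arctan (Real.sqrt (b ^ 2 - 1))
      ≤ Real.arctan (Real.sqrt (r ^ 2 - 1)) := by
  set x := Real.sqrt (b ^ 2 * r ^ 2 - 1) with hxdef
  set y := Real.sqrt (b ^ 2 - 1) with hydef
  set s := Real.sqrt (r ^ 2 - 1) with hsdef
  have hx0 : 0 ≤ x := Real.sqrt_nonneg _
  have hy0 : 0 ≤ y := Real.sqrt_nonneg _
  have hs0 : 0 ≤ s := Real.sqrt_nonneg _
  have hx2 : x ^ 2 = b ^ 2 * r ^ 2 - 1 := Real.sq_sqrt (by linarith [aux_one_le hb hr.le])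
  have hy2 : y ^ 2 = b ^ 2 - 1 := Real.sq_sqrt (by nlinarith)
  have hs2 : s ^ 2 = r ^ 2 - 1 := Real.sq_sqrt (by nlinarith)
  have hyx : y ≤ x := by nlinarith
  have hsx : s ≤ x := by nlinarith
  have hxy : (0:ℝ) < 1 + x * y := by nlinarith
  set u := (x - y) / (1 + x * y) with hudef
  have hyu : y * u < 1 := by
    rw [hudef, mul_div_assoc', div_lt_one hxy]
    nlinarith
  have hadd := Real.arctan_add hyu
  have hne : (1:ℝ) - y * u ≠ 0 := by nlinarith
  have harg : (y + u) / (1 - y * u) = x := by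
    rw [div_eq_iff hne, hudef]
    field_simp
    ring
  rw [harg] at hadd
  have hb2 : b ^ 2 ≤ 1 + x * y := by nlinarith
  have hus : u ≤ s := by
    rw [hudef, div_le_iff₀ hxy]
    have hspos : 0 < s := by nlinarith
    have hxys : 0 < x + y := by linarith [lt_of_lt_of_le hspos hsx]
    have e1 : (x - y) * (x + y) = b ^ 2 * s ^ 2 := by
      have h : (x - y) * (x + y) = x ^ 2 - y ^ 2 := by ring
      rw [h, hx2, hy2, hs2]; ring
    have e2 : b ^ 2 * s ^ 2 ≤ s * b ^ 2 * x := by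
      have := mul_le_mul_of_nonneg_left hsx (by positivity : (0:ℝ) ≤ s * b ^ 2)
      nlinarith
    have e3 : s * b ^ 2 * x ≤ s * b ^ 2 * (x + y) :=
      mul_le_mul_of_nonneg_left (by linarith) (by positivity)
    have e4 : s * b ^ 2 * (x + y) ≤ s * (1 + x * y) * (x + y) :=
      mul_le_mul_of_nonneg_right
        (mul_le_mul_of_nonneg_left hb2 hs0) hxys.le
    have key : (x - y) * (x + y) ≤ s * (1 + x * y) * (x + y) := by
      rw [e1]; linarith
    exact le_of_mul_le_mul_right key hxys
  have := Real.arctan_strictMono.monotone hus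
  linarith [hadd]

theorem no_radial_minimizer_p_one (r R : ℝ) (hr : 1 < r)
    (hR : Real.pi / 2 - Real.arctan (1 / Real.sqrt (r ^ 2 - 1)) < Real.log R) :
    ¬ ∃ b : ℝ, 1 ≤ b ∧ ∃ H H' : ℝ → ℝ,
      (∀ t ∈ Icc 1 r, HasDerivAt H (H' t) t) ∧
      (∀ t ∈ Icc 1 r, t * H' t / H t = 1 / Real.sqrt (b ^ 2 * t ^ 2 - 1)) ∧
      H 1 = 1 ∧ H r = R := by
  rintro ⟨b, hb, H, H', hderiv, hode, hH1, hHr⟩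
  have hs0 : 0 < Real.sqrt (r ^ 2 - 1) := Real.sqrt_pos.mpr (by nlinarith)
  have hcont : ContinuousOn H (Icc 1 r) := fun x hx =>
    (hderiv x hx).continuousAt.continuousWithinAt
  -- positivity of H on [1, r]
  have hHpos : ∀ t ∈ Icc 1 r, 0 < H t := by
    by_contra h
    push_neg at h
    obtain ⟨t, ht, hHt⟩ := h
    have h1t : Icc 1 t ⊆ Icc 1 r := Icc_subset_Icc le_rfl ht.2
    obtain ⟨c, hc, hc0⟩ := intermediate_value_Icc' ht.1 (hcont.mono h1t)
      (show (0:ℝ) ∈ Icc (H t) (H 1) by rw [hH1]; exact ⟨hHt, zero_le_one⟩)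
    have hc1 : 1 < c := by
      rcases eq_or_lt_of_le hc.1 with h | h
      · exfalso; rw [← h, hH1] at hc0; norm_num at hc0
      · exact h
    have hcr : c ∈ Icc 1 r := ⟨hc.1, le_trans hc.2 ht.2⟩
    have hodec := hode c hcr
    rw [hc0, div_zero] at hodec
    have hpos : 0 < Real.sqrt (b ^ 2 * c ^ 2 - 1) :=
      Real.sqrt_pos.mpr (by linarith [aux_one_lt hb hc1])
    have h01 : (0:ℝ) < 1 / Real.sqrt (b ^ 2 * c ^ 2 - 1) := by positivity
    linarith [hodec, h01]
  -- key inequality for every t₀ ∈ (1, r)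
  have hkey : ∀ t₀ ∈ Ioo (1:ℝ) r, Real.log R ≤ Real.log (H t₀) +
      (Real.arctan (Real.sqrt (b ^ 2 * r ^ 2 - 1)) - Real.arctan (Real.sqrt (b ^ 2 - 1))) := by
    intro t₀ ht₀
    set g : ℝ → ℝ := fun t => Real.log (H t) - Real.arctan (Real.sqrt (b ^ 2 * t ^ 2 - 1))
      with hgdef
    have hsub : Icc t₀ r ⊆ Icc 1 r := Icc_subset_Icc ht₀.1.le le_rfl
    have hgc : ContinuousOn g (Icc t₀ r) := by
      apply ContinuousOn.sub
      · exact ((hcont.mono hsub).log (fun x hx => (hHpos x (hsub hx)).ne'))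
      · exact (Real.continuous_arctan.comp (Real.continuous_sqrt.comp
          (by continuity))).continuousOn
    have hgd : ∀ x ∈ Ico t₀ r, HasDerivWithinAt g 0 (Ici x) x := by
      intro x hx
      have hx1 : 1 < x := lt_of_lt_of_le ht₀.1 hx.1
      have hxr : x ∈ Icc 1 r := ⟨hx1.le, hx.2.le⟩
      have hxpos : 0 < b ^ 2 * x ^ 2 - 1 := by linarith [aux_one_lt hb hx1]
      have hsq : 0 < Real.sqrt (b ^ 2 * x ^ 2 - 1) := Real.sqrt_pos.mpr hxpos
      have hu : HasDerivAt (fun t : ℝ => b ^ 2 * t ^ 2 - 1) (b ^ 2 * (2 * x)) x := by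
        simpa using ((hasDerivAt_pow 2 x).const_mul (b ^ 2)).sub_const 1
      have had := (hu.sqrt hxpos.ne').arctan
      have hld := (hderiv x hxr).log (hHpos x hxr).ne'
      have hsqsq : Real.sqrt (b ^ 2 * x ^ 2 - 1) ^ 2 = b ^ 2 * x ^ 2 - 1 :=
        Real.sq_sqrt hxpos.le
      have hodex := hode x hxr
      have hx0 : (0:ℝ) < x := by linarith
      have hHx : H x ≠ 0 := (hHpos x hxr).ne'
      have hratio : H' x / H x = 1 / (x * Real.sqrt (b ^ 2 * x ^ 2 - 1)) := by
        field_simp at hodex ⊢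
        linarith [hodex]
      have hda : HasDerivAt g 0 x := by
        refine (hld.sub had).congr_deriv ?_
        symm
        rw [hratio, hsqsq]
        have h1 : (1:ℝ) + (b ^ 2 * x ^ 2 - 1) = b ^ 2 * x ^ 2 := by ring
        rw [h1]
        have hbx : b ^ 2 * x ^ 2 ≠ 0 := by positivity
        field_simp
        ring
      exact hda.hasDerivWithinAt
    have heq : g r = g t₀ :=
      constant_of_has_deriv_right_zero hgc hgd r (right_mem_Icc.mpr ht₀.2.le)
    have heq' : Real.log (H r) - Real.arctan (Real.sqrt (b ^ 2 * r ^ 2 - 1)) =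
        Real.log (H t₀) - Real.arctan (Real.sqrt (b ^ 2 * t₀ ^ 2 - 1)) := heq
    have hmono : Real.arctan (Real.sqrt (b ^ 2 - 1)) ≤
        Real.arctan (Real.sqrt (b ^ 2 * t₀ ^ 2 - 1)) := by
      apply Real.arctan_strictMono.monotone
      apply Real.sqrt_le_sqrt
      nlinarith [mul_nonneg (sq_nonneg b) (show (0:ℝ) ≤ t₀ ^ 2 - 1 by nlinarith [ht₀.1])]
    rw [← hHr]
    linarith
  -- take the limit t₀ → 1⁺
  have hne : (𝓝[Ioo (1:ℝ) r] (1:ℝ)).NeBot := by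
    apply mem_closure_iff_nhdsWithin_neBot.mp
    rw [closure_Ioo (ne_of_lt hr)]
    exact ⟨le_refl 1, hr.le⟩
  have hlog1 : ContinuousAt (fun t => Real.log (H t)) 1 := by
    exact (Real.continuousAt_log (by rw [hH1]; norm_num)).comp
      (hderiv 1 ⟨le_refl 1, hr.le⟩).continuousAt
  have hlim : Tendsto (fun t => Real.log (H t) +
      (Real.arctan (Real.sqrt (b ^ 2 * r ^ 2 - 1)) - Real.arctan (Real.sqrt (b ^ 2 - 1))))
      (𝓝[Ioo (1:ℝ) r] 1) (𝓝 (Real.arctan (Real.sqrt (b ^ 2 * r ^ 2 - 1)) -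
        Real.arctan (Real.sqrt (b ^ 2 - 1)))) := by
    have h1 : Tendsto (fun t => Real.log (H t)) (𝓝[Ioo (1:ℝ) r] 1) (𝓝 0) := by
      have h2 := hlog1.continuousWithinAt (s := Ioo (1:ℝ) r)
      simpa [ContinuousWithinAt, hH1] using h2
    simpa using h1.add tendsto_const_nhds
  have hlogR : Real.log R ≤ Real.arctan (Real.sqrt (b ^ 2 * r ^ 2 - 1)) -
      Real.arctan (Real.sqrt (b ^ 2 - 1)) :=
    ge_of_tendsto hlim (eventually_mem_nhdsWithin.mono fun t ht => hkey t ht)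
  have hfinal := key_arctan_ineq b r hb hr
  have hinv : Real.arctan (1 / Real.sqrt (r ^ 2 - 1)) =
      Real.pi / 2 - Real.arctan (Real.sqrt (r ^ 2 - 1)) := by
    rw [one_div]; exact Real.arctan_inv_of_pos hs0
  linarith
end
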